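/- For discrete random variables X and Y on a probability space, X is almost surely a function of Y if and only if every random variable U (on an extension of the probability space) that is independent of Y is also independent of X. -/

import Mathlib

open MeasureTheory ProbabilityTheory
open scoped ENNReal

/-- withDensity of (indicator A 1 + indicator Bᶜ const r) evaluated on a set. -/
lemma wd_eval {Ω : Type} [MeasurableSpace Ω] (μ : Measure Ω) (A B : Set Ω)
    (hA : MeasurableSet A) (hB : MeasurableSet B) (r : ℝ≥0∞) (S : Set Ω)
    (hS : MeasurableSet S) :
    μ.withDensity (fun ω => A.indicator 1 ω + Bᶜ.indicator (fun _ => r) ω) S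
      = μ (S ∩ A) + r * μ (S ∩ Bᶜ) := by
  rw [withDensity_apply _ hS]
  rw [lintegral_add_left (measurable_one.indicator hA)]
  rw [lintegral_indicator hA, lintegral_indicator hB.compl]
  simp [Measure.restrict_restrict, hA, hB.compl, lintegral_const,
    Measure.restrict_apply, Set.inter_comm]

lemma wd_eval2 {Ω : Type} [MeasurableSpace Ω] (μ : Measure Ω) [IsFiniteMeasure μ]
    (A B : Set Ω) (hA : MeasurableSet A) (hB : MeasurableSet B) (hAB : A ⊆ B)
    (r : ℝ≥0∞) (hr : μ A = r * μ B) (T : Set Ω) (hT : MeasurableSet T)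
    (hBT : B ⊆ T ∨ Disjoint B T) :
    μ.withDensity (fun ω => A.indicator 1 ω + Bᶜ.indicator (fun _ => r) ω) T
      = r * μ T := by
  rw [wd_eval μ A B hA hB r T hT]
  rcases hBT with hBT | hBT
  · have h1 : T ∩ A = A := Set.inter_eq_self_of_subset_right (hAB.trans hBT)
    have h2 : μ T = μ B + μ (T ∩ Bᶜ) := by
      have := measure_inter_add_diff T hB (μ := μ)
      rw [Set.inter_eq_self_of_subset_right hBT] at this
      rw [← this, Set.diff_eq]
    rw [h1, h2, mul_add, hr]
  · have h1 : T ∩ A = ∅ := by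
      rw [Set.eq_empty_iff_forall_notMem]
      intro x hx
      exact (Set.disjoint_left.mp hBT) (hAB hx.2) hx.1
    have h2 : T ∩ Bᶜ = T := by
      rw [Set.inter_eq_self_of_subset_left]
      intro x hx hxB
      exact (Set.disjoint_left.mp hBT) hxB hx
    rw [h1, h2]
    simp

theorem stmt0
    {Ω : Type} [MeasurableSpace Ω] (μ : Measure Ω) [IsProbabilityMeasure μ]
    (X Y : Ω → ℕ) (hX : Measurable X) (hY : Measurable Y) :
    (∃ f : ℕ → ℕ, X =ᵐ[μ] fun ω => f (Y ω)) ↔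
      ∀ (Ω' : Type) [MeasurableSpace Ω'] (μ' : Measure Ω'),
        IsProbabilityMeasure μ' →
        ∀ (X' Y' U : Ω' → ℕ),
          Measurable X' → Measurable Y' → Measurable U →
          Measure.map (fun ω => (X' ω, Y' ω)) μ' = Measure.map (fun ω => (X ω, Y ω)) μ →
          IndepFun U Y' μ' → IndepFun U X' μ' := by
  constructor
  · rintro ⟨f, hf⟩ Ω' _ μ' _ X' Y' U hX' hY' hU hmap hUY
    have hfm : Measurable f := measurable_of_countable f
    have hXYm : Measurable (fun ω => (X ω, Y ω)) := hX.prodMk hY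
    have hXY'm : Measurable (fun ω => (X' ω, Y' ω)) := hX'.prodMk hY'
    have hsetm : MeasurableSet {p : ℕ × ℕ | p.1 ≠ f p.2} := (Set.to_countable _).measurableSet
    have h2 : μ ((fun ω => (X ω, Y ω)) ⁻¹' {p : ℕ × ℕ | p.1 ≠ f p.2}) = 0 := by
      have hf' := hf
      rw [Filter.EventuallyEq, ae_iff] at hf'
      exact hf'
    have h0 : μ' {ω | X' ω ≠ f (Y' ω)} = 0 := by
      have h1 : μ' ((fun ω => (X' ω, Y' ω)) ⁻¹' {p : ℕ × ℕ | p.1 ≠ f p.2}) =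
          μ ((fun ω => (X ω, Y ω)) ⁻¹' {p : ℕ × ℕ | p.1 ≠ f p.2}) := by
        rw [← Measure.map_apply hXY'm hsetm, ← Measure.map_apply hXYm hsetm, hmap]
      rw [h2] at h1
      exact h1
    have hae : (fun ω => f (Y' ω)) =ᵐ[μ'] X' := by
      rw [Filter.EventuallyEq, ae_iff]
      convert h0 using 2
      ext ω
      simp [ne_comm]
    exact (hUY.comp measurable_id hfm).congr (Filter.EventuallyEq.refl _ _) hae
  · intro H
    by_contra hnof
    have key : ∃ n0, μ (Y ⁻¹' {n0}) ≠ 0 ∧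
        ∀ x, μ (X ⁻¹' {x} ∩ Y ⁻¹' {n0}) ≠ μ (Y ⁻¹' {n0}) := by
      by_contra hk
      push_neg at hk
      -- hk : ∀ n, μ (Y ⁻¹' {n}) ≠ 0 → ∃ x, μ (X ⁻¹' {x} ∩ Y ⁻¹' {n}) = μ (Y ⁻¹' {n})
      classical
      refine hnof ⟨fun n => if h : μ (Y ⁻¹' {n}) ≠ 0 then Classical.choose (hk n h) else 0, ?_⟩
      set f : ℕ → ℕ := fun n => if h : μ (Y ⁻¹' {n}) ≠ 0 then Classical.choose (hk n h) else 0 with hfdef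
      rw [Filter.EventuallyEq, ae_iff]
      have hsub : {ω | ¬ X ω = f (Y ω)} ⊆ ⋃ n, (Y ⁻¹' {n} \ X ⁻¹' {f n}) := by
        intro ω hω
        exact Set.mem_iUnion.mpr ⟨Y ω, ⟨rfl, hω⟩⟩
      refine measure_mono_null hsub (measure_iUnion_null fun n => ?_)
      by_cases h : μ (Y ⁻¹' {n}) ≠ 0
      · have hx := Classical.choose_spec (hk n h)
        have hfn : f n = Classical.choose (hk n h) := by simp [hfdef, h]
        have hd := measure_inter_add_diff (Y ⁻¹' {n}) (hX (measurableSet_singleton (f n))) (μ := μ)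
        rw [Set.inter_comm, hfn, hx] at hd
        have hfin : μ (Y ⁻¹' {n}) ≠ ⊤ := measure_ne_top μ _
        rw [hfn]
        exact (ENNReal.add_right_inj hfin).mp (hd.trans (add_zero _).symm)
      · push_neg at h
        exact measure_mono_null Set.diff_subset h
    obtain ⟨n0, hβ0, hneall⟩ := key
    obtain ⟨x0, hα0⟩ : ∃ x0, μ (X ⁻¹' {x0} ∩ Y ⁻¹' {n0}) ≠ 0 := by
      by_contra hall
      push_neg at hall
      refine hβ0 (measure_mono_null ?_ (measure_iUnion_null hall))
      intro ω hω
      exact Set.mem_iUnion.mpr ⟨X ω, ⟨rfl, hω⟩⟩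
    have hne := hneall x0
    exfalso
    classical
    set B : Set Ω := Y ⁻¹' {n0} with hBdef
    set A : Set Ω := X ⁻¹' {x0} ∩ Y ⁻¹' {n0} with hAdef
    have hBm : MeasurableSet B := hY (measurableSet_singleton n0)
    have hAm : MeasurableSet A := (hX (measurableSet_singleton x0)).inter hBm
    have hAB : A ⊆ B := Set.inter_subset_right
    have hBAm : MeasurableSet (B \ A) := hBm.diff hAm
    have hBAsub : B \ A ⊆ B := Set.diff_subset
    set α := μ A with hαdef
    set β := μ B with hβdef
    set γ := μ (B \ A) with hγdef
    have hβt : β ≠ ⊤ := measure_ne_top μ B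
    have hαβγ : α + γ = β := by
      have := measure_inter_add_diff B hAm (μ := μ)
      rwa [Set.inter_eq_self_of_subset_right hAB] at this
    set p := α / β with hpdef
    set q := γ / β with hqdef
    have hpq : p + q = 1 := by
      rw [hpdef, hqdef, ENNReal.div_add_div_same, hαβγ, ENNReal.div_self hβ0 hβt]
    have hpβ : α = p * β := by
      rw [hpdef, div_eq_mul_inv, mul_assoc, ENNReal.inv_mul_cancel hβ0 hβt, mul_one]
    have hqβ : γ = q * β := by
      rw [hqdef, div_eq_mul_inv, mul_assoc, ENNReal.inv_mul_cancel hβ0 hβt, mul_one]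
    -- two densities
    set h : Ω → ℝ≥0∞ := fun ω => A.indicator 1 ω + Bᶜ.indicator (fun _ => p) ω with hhdef
    set g : Ω → ℝ≥0∞ := fun ω => (B \ A).indicator 1 ω + Bᶜ.indicator (fun _ => q) ω with hgdef
    have hhm : Measurable h := (measurable_one.indicator hAm).add (measurable_const.indicator hBm.compl)
    have hgm : Measurable g := (measurable_one.indicator hBAm).add (measurable_const.indicator hBm.compl)
    have hhg : (fun ω => h ω + g ω) = fun _ => (1 : ℝ≥0∞) := by
      funext ω
      by_cases hωB : ω ∈ B
      · by_cases hωA : ω ∈ A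
        · simp [hhdef, hgdef, Set.indicator_apply, hωA, hωB, fun h : ω ∈ Bᶜ => h hωB,
            fun h : ω ∈ B \ A => h.2 hωA]
        · simp [hhdef, hgdef, Set.indicator_apply, hωA, hωB, fun h : ω ∈ Bᶜ => h hωB]
      · have hωA : ω ∉ A := fun h => hωB (hAB h)
        have hωBA : ω ∉ B \ A := fun h => hωB h.1
        simp [hhdef, hgdef, Set.indicator_apply, hωA, hωB, hωBA, hpq]
    set ν1 := μ.withDensity h with hν1def
    set ν2 := μ.withDensity g with hν2def
    have hsum : ν1 + ν2 = μ := by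
      rw [hν1def, hν2def, ← withDensity_add_left hhm g]
      have : (h + g) = fun _ => (1 : ℝ≥0∞) := hhg
      rw [this]
      exact withDensity_one
    -- the extension
    set ι : Bool → Ω → Ω × Bool := fun b ω => (ω, b) with hιdef
    have hιm : ∀ b, Measurable (ι b) := fun b => measurable_id.prodMk measurable_const
    set μ' : Measure (Ω × Bool) := ν1.map (ι true) + ν2.map (ι false) with hμ'def
    have hμ'eval : ∀ E : Set (Ω × Bool), MeasurableSet E →
        μ' E = ν1 ((ι true) ⁻¹' E) + ν2 ((ι false) ⁻¹' E) := by
      intro E hE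
      rw [hμ'def, Measure.add_apply, Measure.map_apply (hιm true) hE,
        Measure.map_apply (hιm false) hE]
    -- key evaluations
    have hν1T : ∀ T : Set Ω, MeasurableSet T → (B ⊆ T ∨ Disjoint B T) → ν1 T = p * μ T :=
      fun T hT hBT => wd_eval2 μ A B hAm hBm hAB p hpβ T hT hBT
    have hν2T : ∀ T : Set Ω, MeasurableSet T → (B ⊆ T ∨ Disjoint B T) → ν2 T = q * μ T :=
      fun T hT hBT => wd_eval2 μ (B \ A) B hBAm hBm hBAsub q hqβ T hT hBT
    have hBY : ∀ t : Set ℕ, B ⊆ Y ⁻¹' t ∨ Disjoint B (Y ⁻¹' t) := by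
      intro t
      by_cases hn : n0 ∈ t
      · left; intro ω hω; simp only [hBdef, Set.mem_preimage, Set.mem_singleton_iff] at hω
        simp [Set.mem_preimage, hω, hn]
      · right; rw [Set.disjoint_left]; intro ω hω hω2
        simp only [hBdef, Set.mem_preimage, Set.mem_singleton_iff] at hω
        exact hn (hω ▸ hω2)
    have hprob : IsProbabilityMeasure μ' := by
      constructor
      rw [hμ'eval Set.univ MeasurableSet.univ]
      simp only [Set.preimage_univ]
      rw [hν1T Set.univ MeasurableSet.univ (Or.inl (Set.subset_univ B)),
        hν2T Set.univ MeasurableSet.univ (Or.inl (Set.subset_univ B))]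
      rw [← add_mul, hpq, one_mul, measure_univ]
    set X' : Ω × Bool → ℕ := fun ω => X ω.1 with hX'def
    set Y' : Ω × Bool → ℕ := fun ω => Y ω.1 with hY'def
    set U : Ω × Bool → ℕ := fun ω => cond ω.2 1 0 with hUdef
    have hX'm : Measurable X' := hX.comp measurable_fst
    have hY'm : Measurable Y' := hY.comp measurable_fst
    have hUm : Measurable U := (measurable_of_countable (fun b : Bool => cond b 1 0)).comp measurable_snd
    have hmap : Measure.map (fun ω => (X' ω, Y' ω)) μ' = Measure.map (fun ω => (X ω, Y ω)) μ := by
      have hXYm : Measurable fun ω => (X ω, Y ω) := hX.prodMk hY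
      rw [hμ'def, Measure.map_add _ _ (hX'm.prodMk hY'm),
        Measure.map_map (hX'm.prodMk hY'm) (hιm true),
        Measure.map_map (hX'm.prodMk hY'm) (hιm false)]
      have hc : ∀ b, ((fun ω => (X' ω, Y' ω)) ∘ ι b) = fun ω => (X ω, Y ω) := fun b => rfl
      rw [hc true, hc false, ← Measure.map_add _ _ hXYm, hsum]
    have hUY : IndepFun U Y' μ' := by
      rw [indepFun_iff_measure_inter_preimage_eq_mul]
      intro s t _ _
      have hYt : MeasurableSet (Y ⁻¹' t) := hY (Set.to_countable t).measurableSet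
      have hE1 : (ι true) ⁻¹' (U ⁻¹' s ∩ Y' ⁻¹' t) =
          if (1 : ℕ) ∈ s then Y ⁻¹' t else ∅ := by
        by_cases h1 : (1 : ℕ) ∈ s <;> · ext ω; simp [hUdef, hY'def, hιdef, h1]
      have hE0 : (ι false) ⁻¹' (U ⁻¹' s ∩ Y' ⁻¹' t) =
          if (0 : ℕ) ∈ s then Y ⁻¹' t else ∅ := by
        by_cases h0 : (0 : ℕ) ∈ s <;> · ext ω; simp [hUdef, hY'def, hιdef, h0]
      have hF1 : (ι true) ⁻¹' (U ⁻¹' s) = if (1 : ℕ) ∈ s then Set.univ else ∅ := by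
        by_cases h1 : (1 : ℕ) ∈ s <;> · ext ω; simp [hUdef, hιdef, h1]
      have hF0 : (ι false) ⁻¹' (U ⁻¹' s) = if (0 : ℕ) ∈ s then Set.univ else ∅ := by
        by_cases h0 : (0 : ℕ) ∈ s <;> · ext ω; simp [hUdef, hιdef, h0]
      have hG : ∀ b, (ι b) ⁻¹' (Y' ⁻¹' t) = Y ⁻¹' t := fun b => rfl
      have hEm : MeasurableSet (U ⁻¹' s ∩ Y' ⁻¹' t) :=
        (hUm (Set.to_countable s).measurableSet).inter (hY'm (Set.to_countable t).measurableSet)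
      have hUm' : MeasurableSet (U ⁻¹' s) := hUm (Set.to_countable s).measurableSet
      have hYm' : MeasurableSet (Y' ⁻¹' t) := hY'm (Set.to_countable t).measurableSet
      rw [hμ'eval _ hEm, hμ'eval _ hUm', hμ'eval _ hYm', hE1, hE0, hF1, hF0, hG, hG]
      rw [hν1T _ hYt (hBY t), hν2T _ hYt (hBY t)]
      have huniv1 : ν1 Set.univ = p := by
        rw [hν1T Set.univ MeasurableSet.univ (Or.inl (Set.subset_univ B)), measure_univ, mul_one]
      have huniv2 : ν2 Set.univ = q := by
        rw [hν2T Set.univ MeasurableSet.univ (Or.inl (Set.subset_univ B)), measure_univ, mul_one]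
      by_cases h1 : (1 : ℕ) ∈ s <;> by_cases h0 : (0 : ℕ) ∈ s <;>
          simp only [h1, h0, if_true, if_false, ite_true, ite_false, measure_empty, add_zero,
            zero_add, huniv1, huniv2, hν1T _ hYt (hBY t), hν2T _ hYt (hBY t)] <;>
        first
          | simp
          | (rw [← add_mul, hpq, one_mul]; try simp)
    have hUX : IndepFun U X' μ' := H (Ω × Bool) μ' hprob X' Y' U hX'm hY'm hUm hmap hUY
    -- derive contradiction
    rw [indepFun_iff_measure_inter_preimage_eq_mul] at hUX
    have hkey := hUX {1} {x0} (measurableSet_singleton 1) (measurableSet_singleton x0)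
    set S : Set Ω := X ⁻¹' {x0} with hSdef
    have hSm : MeasurableSet S := hX (measurableSet_singleton x0)
    have hE1 : (ι true) ⁻¹' (U ⁻¹' {1} ∩ X' ⁻¹' {x0}) = S := by
      ext ω; simp [hUdef, hX'def, hιdef, hSdef]
    have hE0 : (ι false) ⁻¹' (U ⁻¹' {1} ∩ X' ⁻¹' {x0}) = ∅ := by
      ext ω; simp [hUdef, hX'def, hιdef]
    have hF1 : (ι true) ⁻¹' (U ⁻¹' ({1} : Set ℕ)) = Set.univ := by
      ext ω; simp [hUdef, hιdef]
    have hF0 : (ι false) ⁻¹' (U ⁻¹' ({1} : Set ℕ)) = ∅ := by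
      ext ω; simp [hUdef, hιdef]
    have hEm : MeasurableSet (U ⁻¹' ({1} : Set ℕ) ∩ X' ⁻¹' {x0}) :=
      (hUm (measurableSet_singleton 1)).inter (hX'm (measurableSet_singleton x0))
    have hUm' : MeasurableSet (U ⁻¹' ({1} : Set ℕ)) := hUm (measurableSet_singleton 1)
    have hXm' : MeasurableSet (X' ⁻¹' ({x0} : Set ℕ)) := hX'm (measurableSet_singleton x0)
    rw [hμ'eval _ hEm, hμ'eval _ hUm', hμ'eval _ hXm', hE1, hE0, hF1, hF0] at hkey
    have hGX : ∀ b, (ι b) ⁻¹' (X' ⁻¹' ({x0} : Set ℕ)) = S := fun b => rfl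
    rw [hGX true, hGX false] at hkey
    have huniv1 : ν1 Set.univ = p := by
      rw [hν1T Set.univ MeasurableSet.univ (Or.inl (Set.subset_univ B)), measure_univ, mul_one]
    have huniv2 : ν2 Set.univ = q := by
      rw [hν2T Set.univ MeasurableSet.univ (Or.inl (Set.subset_univ B)), measure_univ, mul_one]
    -- ν1 S = α + p * μ (S ∩ Bᶜ), ν2 S + ν1 S = μ S
    have hν1S : ν1 S = α + p * μ (S ∩ Bᶜ) := by
      have hSA : S ∩ A = A := Set.inter_eq_self_of_subset_right Set.inter_subset_left
      rw [hν1def, hhdef, wd_eval μ A B hAm hBm p S hSm, hSA]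
    have hν12S : ν1 S + ν2 S = μ S := by
      have := congrArg (fun ν : Measure Ω => ν S) hsum
      simpa using this
    have hμS : μ S = α + μ (S ∩ Bᶜ) := by
      have := measure_inter_add_diff S hBm (μ := μ)
      have hSB : S ∩ B = A := by
        ext ω; simp [hSdef, hBdef, hAdef]
      rw [hSB, Set.diff_eq] at this
      rw [← this, hαdef]
    rw [measure_empty, add_zero, add_zero, huniv1, hν12S, hμS, hν1S, mul_add] at hkey
    -- hkey : α + p * μ (S ∩ Bᶜ) = p * α + p * μ (S ∩ Bᶜ)
    have hpt : p ≠ ⊤ := by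
      rw [hpdef]
      exact fun htop => (ENNReal.div_eq_top.mp htop).elim (fun h => hβ0 h.2)
        (fun h => measure_ne_top μ A h.1)
    have hfin : p * μ (S ∩ Bᶜ) ≠ ⊤ := ENNReal.mul_ne_top hpt (measure_ne_top μ _)
    have hαpα : α = p * α := by
      have := (ENNReal.add_left_inj hfin).mp hkey
      exact this
    have hp1 : p = 1 := by
      have := hαpα.symm
      rw [mul_comm] at this
      have h1 : α * p = α * 1 := by rw [this, mul_one]
      exact (ENNReal.mul_right_inj hα0 (measure_ne_top μ A)).mp h1
    rw [hpdef, ENNReal.div_eq_one_iff hβ0 hβt] at hp1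
    exact hne hp1
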